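/- Every abelian normal subgroup of SL(2,ℤ) is contained in the two-element subgroup {I, −I}, i.e., in the center of SL(2,ℤ). -/

import Mathlib

theorem stmt19 (A : Subgroup (Matrix.SpecialLinearGroup (Fin 2) ℤ)) [A.Normal]
    (hab : ∀ x ∈ A, ∀ y ∈ A, x * y = y * x) :
    ∀ x ∈ A, (x : Matrix (Fin 2) (Fin 2) ℤ) = 1 ∨
      (x : Matrix (Fin 2) (Fin 2) ℤ) = -1 := by
  intro x hx
  set T : Matrix.SpecialLinearGroup (Fin 2) ℤ :=
    ⟨!![1,1;0,1], by simp [Matrix.det_fin_two_of]⟩ with hT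
  set T' : Matrix.SpecialLinearGroup (Fin 2) ℤ :=
    ⟨!![1,0;1,1], by simp [Matrix.det_fin_two_of]⟩ with hT'
  have hn : A.Normal := inferInstance
  have h1 : T * x * T⁻¹ ∈ A := hn.conj_mem x hx T
  have h2 : T' * x * T'⁻¹ ∈ A := hn.conj_mem x hx T'
  have c1 := hab x hx _ h1
  have c2 := hab x hx _ h2
  have e1 := congrArg (fun g : Matrix.SpecialLinearGroup (Fin 2) ℤ =>
    (g : Matrix (Fin 2) (Fin 2) ℤ)) c1
  have e2 := congrArg (fun g : Matrix.SpecialLinearGroup (Fin 2) ℤ =>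
    (g : Matrix (Fin 2) (Fin 2) ℤ)) c2
  simp only [Matrix.SpecialLinearGroup.coe_mul, Matrix.SpecialLinearGroup.coe_inv] at e1 e2
  set a := (x : Matrix (Fin 2) (Fin 2) ℤ) 0 0 with ha
  set b := (x : Matrix (Fin 2) (Fin 2) ℤ) 0 1 with hb
  set c := (x : Matrix (Fin 2) (Fin 2) ℤ) 1 0 with hc
  set d := (x : Matrix (Fin 2) (Fin 2) ℤ) 1 1 with hd
  have hm : (x : Matrix (Fin 2) (Fin 2) ℤ) = !![a,b;c,d] := by
    rw [ha, hb, hc, hd]; exact Matrix.eta_fin_two _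
  have hdet : a * d - b * c = 1 := by
    have := x.2
    rw [hm, Matrix.det_fin_two_of] at this
    linarith
  rw [hm] at e1 e2
  rw [show (T : Matrix (Fin 2) (Fin 2) ℤ) = !![1,1;0,1] from rfl] at e1
  rw [show (T' : Matrix (Fin 2) (Fin 2) ℤ) = !![1,0;1,1] from rfl] at e2
  simp only [Matrix.adjugate_fin_two_of, Matrix.mul_fin_two] at e1 e2
  have f1 := congrFun (congrFun e1 1) 0
  have f2 := congrFun (congrFun e2 0) 1
  simp at f1 f2
  have hc0 : c = 0 := by nlinarith [f1, sq_nonneg c]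
  have hb0 : b = 0 := by nlinarith [f2, sq_nonneg b]
  rw [hc0, hb0, mul_zero, sub_zero] at hdet
  rw [hm, hb0, hc0]
  rcases Int.eq_one_or_neg_one_of_mul_eq_one' hdet with ⟨h1', h2'⟩ | ⟨h1', h2'⟩
  · left; rw [h1', h2']; decide
  · right; rw [h1', h2']; decide
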